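/- arXiv:2106.13902 — 2 statements merged into one kernel-verified Lean document; each statement's English description precedes it below -/
import Mathlib

section
/- Let γ ≥ 2β > 0 and set α = (γ + sqrt(γ² − 4β²))/2. Suppose a sequence (E_n) with E_n > −1 satisfies the recurrence E_{n+1} = f_γ(n) + (β²/α²)·[1 + f_γ(n) − (1 + f_β(n))²/(1 + E_n)], where f_γ(n) → 0 and f_β(n) → 0 as n → ∞, and suppose (E_n) is bounded above and bounded below away from −1 (i.e., there exists σ > 0 with E_n ≥ 1/(ασ) − 1 for all n). If (E_n) has a convergent subsequence with limit E_∞, then E_∞ = 0 or E_∞ = β²/α² − 1. -/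
/-- If `γ ≥ 2β > 0`, `α = (γ + √(γ² - 4β²))/2`, and `(E n)` with `E n > -1` satisfies
the recurrence `E (n+1) = fγ n + (β²/α²)·(1 + fγ n - (1 + fβ n)²/(1 + E n))` with
`fγ, fβ → 0`, is bounded above and bounded below by `1/(ασ) - 1`, then any
subsequential limit of `(E n)` is `0` or `β²/α² - 1`. -/
theorem stmt1 (β γ : ℝ) (hβ : 0 < β) (hγ : 2 * β ≤ γ)
    (α : ℝ) (hα : α = (γ + Real.sqrt (γ ^ 2 - 4 * β ^ 2)) / 2)
    (E fβ fγ : ℕ → ℝ)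
    (hE : ∀ n, -1 < E n)
    (hrec : ∀ n, E (n + 1) = fγ n + (β ^ 2 / α ^ 2) *
      (1 + fγ n - (1 + fβ n) ^ 2 / (1 + E n)))
    (hfγ : Filter.Tendsto fγ Filter.atTop (nhds 0))
    (hfβ : Filter.Tendsto fβ Filter.atTop (nhds 0))
    (C : ℝ) (hub : ∀ n, E n ≤ C)
    (σ : ℝ) (hσ : 0 < σ) (hlb : ∀ n, 1 / (α * σ) - 1 ≤ E n)
    (φ : ℕ → ℕ) (hφ : StrictMono φ) (Elim : ℝ)
    (hlim : Filter.Tendsto (E ∘ φ) Filter.atTop (nhds Elim)) :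
    Elim = 0 ∨ Elim = β ^ 2 / α ^ 2 - 1 := by
  have hsq : 0 ≤ Real.sqrt (γ ^ 2 - 4 * β ^ 2) := Real.sqrt_nonneg _
  have hα0 : 0 < α := by rw [hα]; linarith
  set c : ℝ := β ^ 2 / α ^ 2 with hcdef
  have hc : 0 < c := div_pos (by positivity) (by positivity)
  set m : ℝ := 1 / (α * σ) with hmdef
  have hm : 0 < m := by positivity
  have h1E : ∀ n, m ≤ 1 + E n := fun n => by have := hlb n; linarith
  have hElim1 : m ≤ 1 + Elim := by
    have : m - 1 ≤ Elim := ge_of_tendsto' hlim (fun k => by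
      have := hlb (φ k); simpa [Function.comp] using this)
    linarith
  have hιElim : 0 < 1 + Elim := lt_of_lt_of_le hm hElim1
  set g : ℝ → ℝ := fun x => c * (1 - 1 / (1 + x)) with hgdef
  have hgmono : ∀ x y : ℝ, -1 < x → x ≤ y → g x ≤ g y := by
    intro x y hx hxy
    have hx1 : 0 < 1 + x := by linarith
    have hy1 : 0 < 1 + y := by linarith
    have hdiv : 1 / (1 + y) ≤ 1 / (1 + x) := one_div_le_one_div_of_le hx1 (by linarith)
    have : c * (1 - 1 / (1 + x)) ≤ c * (1 - 1 / (1 + y)) := by nlinarith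
    simpa [hgdef] using this
  set ε : ℕ → ℝ := fun n => E (n + 1) - g (E n) with hεdef
  have hrecg : ∀ n, E (n + 1) = g (E n) + ε n := fun n => by simp [hεdef]
  have hεeq : ∀ n, ε n = fγ n * (1 + c) + c * ((1 - (1 + fβ n) ^ 2) / (1 + E n)) := by
    intro n
    have h0 : (1 : ℝ) + E n ≠ 0 := ne_of_gt (lt_of_lt_of_le hm (h1E n))
    simp only [hεdef, hrec n, hgdef]
    field_simp
    ring
  have hεbound : ∀ n, |ε n| ≤ (1 + c) * |fγ n| + (c / m) * |1 - (1 + fβ n) ^ 2| := by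
    intro n
    rw [hεeq n]
    have h0 : 0 < 1 + E n := lt_of_lt_of_le hm (h1E n)
    have t1 : |fγ n * (1 + c)| = (1 + c) * |fγ n| := by
      rw [abs_mul, abs_of_nonneg (by linarith : (0:ℝ) ≤ 1 + c)]; ring
    have t2 : |c * ((1 - (1 + fβ n) ^ 2) / (1 + E n))| ≤ (c / m) * |1 - (1 + fβ n) ^ 2| := by
      have heq3 : |c * ((1 - (1 + fβ n) ^ 2) / (1 + E n))|
          = c * (|1 - (1 + fβ n) ^ 2| / (1 + E n)) := by
        rw [abs_mul, abs_of_pos hc, abs_div, abs_of_pos h0]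
      rw [heq3]
      have hdd : |1 - (1 + fβ n) ^ 2| / (1 + E n) ≤ |1 - (1 + fβ n) ^ 2| / m :=
        div_le_div_of_nonneg_left (abs_nonneg _) hm (h1E n)
      calc c * (|1 - (1 + fβ n) ^ 2| / (1 + E n))
          ≤ c * (|1 - (1 + fβ n) ^ 2| / m) := mul_le_mul_of_nonneg_left hdd hc.le
        _ = (c / m) * |1 - (1 + fβ n) ^ 2| := by ring
    calc |fγ n * (1 + c) + c * ((1 - (1 + fβ n) ^ 2) / (1 + E n))|
        ≤ |fγ n * (1 + c)| + |c * ((1 - (1 + fβ n) ^ 2) / (1 + E n))| := abs_add_le _ _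
      _ ≤ (1 + c) * |fγ n| + (c / m) * |1 - (1 + fβ n) ^ 2| := by rw [t1]; linarith
  have hsq1 : Filter.Tendsto (fun n => 1 - (1 + fβ n) ^ 2) Filter.atTop (nhds 0) := by
    have h1 : Filter.Tendsto (fun n => (1 + fβ n) ^ 2) Filter.atTop (nhds 1) := by
      have := ((tendsto_const_nhds (x := (1:ℝ)) (f := Filter.atTop (α := ℕ))).add hfβ).pow 2
      simpa using this
    have := (tendsto_const_nhds (x := (1:ℝ)) (f := Filter.atTop (α := ℕ))).sub h1
    simpa using this
  have hεto0 : Filter.Tendsto ε Filter.atTop (nhds 0) := by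
    apply squeeze_zero_norm (fun n => by simpa [Real.norm_eq_abs] using hεbound n)
    have h1 := (hfγ.abs).const_mul (1 + c)
    have h2 := (hsq1.abs).const_mul (c / m)
    have := h1.add h2
    simpa using this
  by_contra hcon
  push_neg at hcon
  obtain ⟨h0', h1'⟩ := hcon
  have hd : g Elim ≠ Elim := by
    intro heq
    have h1e : (1 : ℝ) + Elim ≠ 0 := ne_of_gt hιElim
    have hkey : Elim * (c - 1 - Elim) = 0 := by
      have h' : c * (1 - 1 / (1 + Elim)) = Elim := heq
      field_simp at h'
      nlinarith [h']
    rcases mul_eq_zero.mp hkey with h | h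
    · exact h0' h
    · exact h1' (by linarith)
  have hcont : ContinuousAt g Elim := by
    apply ContinuousAt.mul continuousAt_const
    apply ContinuousAt.sub continuousAt_const
    exact ContinuousAt.div continuousAt_const (by fun_prop) (ne_of_gt hιElim)
  rcases hd.lt_or_gt with hlt | hgt
  · -- g Elim < Elim : orbit gets trapped below Elim - δ
    set d : ℝ := Elim - g Elim with hddef
    have hd0 : 0 < d := by simp [hddef]; linarith
    obtain ⟨δ₀, hδ₀, hδ₀prop⟩ := Metric.continuousAt_iff.mp hcont (d / 4) (by positivity)
    set δ : ℝ := min (min (δ₀ / 2) (d / 4)) (m / 2) with hδdef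
    have hδpos : 0 < δ := by positivity
    have hδ1 : δ ≤ δ₀ / 2 := le_trans (min_le_left _ _) (min_le_left _ _)
    have hδ2 : δ ≤ d / 4 := le_trans (min_le_left _ _) (min_le_right _ _)
    have hghigh : g (Elim + δ) ≤ Elim - 2 * δ := by
      have hdist : dist (Elim + δ) Elim < δ₀ := by
        rw [Real.dist_eq]
        rw [abs_of_pos (by linarith : (0:ℝ) < Elim + δ - Elim)]
        linarith
      have := hδ₀prop hdist
      rw [Real.dist_eq] at this
      have := abs_lt.mp this
      have h1 := this.2
      simp only [hddef] at *
      linarith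
    obtain ⟨N, hN⟩ := (Metric.tendsto_atTop.mp hεto0) δ hδpos
    have key : ∀ n, N ≤ n → E n ≤ Elim + δ → E (n + 1) ≤ Elim - δ := by
      intro n hn hEn
      have hε' : |ε n| < δ := by
        have := hN n hn; rwa [Real.dist_eq, sub_zero] at this
      have hmono := hgmono (E n) (Elim + δ) (hE n) hEn
      have hr := hrecg n
      have := abs_lt.mp hε'
      linarith [hghigh]
    obtain ⟨K, hK⟩ := (Metric.tendsto_atTop.mp hlim) δ hδpos
    set k : ℕ := max K N with hkdef
    have hφk : N ≤ φ k := le_trans (le_max_right _ _) hφ.le_apply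
    have hEk : |E (φ k) - Elim| < δ := by
      have := hK k (le_max_left _ _)
      rwa [Function.comp_apply, Real.dist_eq] at this
    have chain : ∀ j, E (φ k + 1 + j) ≤ Elim - δ := by
      intro j
      induction j with
      | zero =>
        have := abs_lt.mp hEk
        simpa using key (φ k) hφk (by linarith)
      | succ j ih =>
        have heq2 : φ k + 1 + (j + 1) = (φ k + 1 + j) + 1 := by omega
        rw [heq2]
        exact key _ (by omega) (by linarith)
    set k' : ℕ := max K (φ k + 1) with hk'def
    have hφk' : φ k + 1 ≤ φ k' := le_trans (le_max_right _ _) hφ.le_apply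
    have hEk' : |E (φ k') - Elim| < δ := by
      have := hK k' (le_max_left _ _)
      rwa [Function.comp_apply, Real.dist_eq] at this
    have : E (φ k') ≤ Elim - δ := by
      have := chain (φ k' - (φ k + 1))
      rwa [show φ k + 1 + (φ k' - (φ k + 1)) = φ k' by omega] at this
    have := abs_lt.mp hEk'
    linarith
  · -- Elim < g Elim : orbit gets trapped above Elim + δ
    set d : ℝ := g Elim - Elim with hddef
    have hd0 : 0 < d := by simp [hddef]; linarith
    obtain ⟨δ₀, hδ₀, hδ₀prop⟩ := Metric.continuousAt_iff.mp hcont (d / 4) (by positivity)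
    set δ : ℝ := min (min (δ₀ / 2) (d / 4)) (m / 2) with hδdef
    have hδpos : 0 < δ := by positivity
    have hδ1 : δ ≤ δ₀ / 2 := le_trans (min_le_left _ _) (min_le_left _ _)
    have hδ2 : δ ≤ d / 4 := le_trans (min_le_left _ _) (min_le_right _ _)
    have hδ3 : δ ≤ m / 2 := min_le_right _ _
    have hdom : -1 < Elim - δ := by linarith
    have hglow : Elim + 2 * δ ≤ g (Elim - δ) := by
      have hdist : dist (Elim - δ) Elim < δ₀ := by
        rw [Real.dist_eq]
        rw [show Elim - δ - Elim = -δ by ring, abs_neg, abs_of_pos hδpos]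
        linarith
      have := hδ₀prop hdist
      rw [Real.dist_eq] at this
      have := abs_lt.mp this
      have h1 := this.1
      simp only [hddef] at *
      linarith
    obtain ⟨N, hN⟩ := (Metric.tendsto_atTop.mp hεto0) δ hδpos
    have key : ∀ n, N ≤ n → Elim - δ ≤ E n → Elim + δ ≤ E (n + 1) := by
      intro n hn hEn
      have hε' : |ε n| < δ := by
        have := hN n hn; rwa [Real.dist_eq, sub_zero] at this
      have hmono := hgmono (Elim - δ) (E n) hdom hEn
      have hr := hrecg n
      have := abs_lt.mp hε'
      linarith [hglow]
    obtain ⟨K, hK⟩ := (Metric.tendsto_atTop.mp hlim) δ hδpos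
    set k : ℕ := max K N with hkdef
    have hφk : N ≤ φ k := le_trans (le_max_right _ _) hφ.le_apply
    have hEk : |E (φ k) - Elim| < δ := by
      have := hK k (le_max_left _ _)
      rwa [Function.comp_apply, Real.dist_eq] at this
    have chain : ∀ j, Elim + δ ≤ E (φ k + 1 + j) := by
      intro j
      induction j with
      | zero =>
        have := abs_lt.mp hEk
        simpa using key (φ k) hφk (by linarith)
      | succ j ih =>
        have heq2 : φ k + 1 + (j + 1) = (φ k + 1 + j) + 1 := by omega
        rw [heq2]
        exact key _ (by omega) (by linarith)
    set k' : ℕ := max K (φ k + 1) with hk'def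
    have hφk' : φ k + 1 ≤ φ k' := le_trans (le_max_right _ _) hφ.le_apply
    have hEk' : |E (φ k') - Elim| < δ := by
      have := hK k' (le_max_left _ _)
      rwa [Function.comp_apply, Real.dist_eq] at this
    have : Elim + δ ≤ E (φ k') := by
      have := chain (φ k' - (φ k + 1))
      rwa [show φ k + 1 + (φ k' - (φ k + 1)) = φ k' by omega] at this
    have := abs_lt.mp hEk'
    linarith
end

section
/- For the MINRES algorithm applied to W x = b with W symmetric positive definite, ‖b‖₂ = 1, and x_0 = 0: with the same Cholesky data α_j, β_j of the Lanczos Jacobi matrix T = H H^T as for CG, the MINRES residual satisfies ‖r_k‖₂ = (1 + Σ_{j=1}^{k} Π_{ℓ=0}^{j−1} (α_ℓ²/β_ℓ²))^{−1/2} for k < n. -/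
open Matrix Finset

/-- product of -α/β over range j -/
noncomputable def pp (α β : ℕ → ℝ) (j : ℕ) : ℝ := ∏ ℓ ∈ Finset.range j, (-α ℓ / β ℓ)

noncomputable def VV (α β : ℕ → ℝ) (k : ℕ) : ℝ :=
  1 + ∑ j ∈ Finset.Icc 1 k, ∏ ℓ ∈ Finset.range j, (α ℓ) ^ 2 / (β ℓ) ^ 2

noncomputable def SS (α β : ℕ → ℝ) (k j : ℕ) : ℝ :=
  ∑ m ∈ Finset.Ico (j+1) (k+1), (pp α β m)^2

lemma pp_zero (α β : ℕ → ℝ) : pp α β 0 = 1 := by simp [pp]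

lemma pp_succ (α β : ℕ → ℝ) (j : ℕ) : pp α β (j+1) = pp α β j * (-α j / β j) := by
  rw [pp, pp, Finset.prod_range_succ]

lemma pp_sq (α β : ℕ → ℝ) (j : ℕ) :
    (pp α β j)^2 = ∏ ℓ ∈ Finset.range j, (α ℓ) ^ 2 / (β ℓ) ^ 2 := by
  rw [pp, ← Finset.prod_pow]
  apply Finset.prod_congr rfl
  intro ℓ _
  ring

lemma pp_ne_zero {α β : ℕ → ℝ} {n : ℕ} (hα : ∀ j, j < n → 0 < α j)
    (hβ : ∀ j, j + 1 < n → 0 < β j) {j : ℕ} (hj : j < n) : pp α β j ≠ 0 := by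
  rw [pp]
  apply Finset.prod_ne_zero_iff.2
  intro ℓ hℓ
  rw [Finset.mem_range] at hℓ
  have h1 : 0 < α ℓ := hα ℓ (by omega)
  have h2 : 0 < β ℓ := hβ ℓ (by omega)
  intro h
  rw [div_eq_zero_iff] at h
  rcases h with h | h
  · exact absurd h (by nlinarith)
  · exact absurd h (by nlinarith)

lemma VV_pos (α β : ℕ → ℝ) (k : ℕ) : 0 < VV α β k := by
  have : (0:ℝ) ≤ ∑ j ∈ Finset.Icc 1 k, ∏ ℓ ∈ Finset.range j, (α ℓ) ^ 2 / (β ℓ) ^ 2 := by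
    apply Finset.sum_nonneg
    intro j _
    apply Finset.prod_nonneg
    intro ℓ _
    positivity
  rw [VV]; linarith

lemma VV_eq_sum (α β : ℕ → ℝ) (k : ℕ) :
    VV α β k = ∑ j ∈ Finset.range (k+1), (pp α β j)^2 := by
  have h1 : Finset.Icc 1 k = Finset.Ico 1 (k+1) := by rw [Finset.Ico_add_one_right_eq_Icc]
  have h2 : ∑ j ∈ Finset.Ico 1 (k+1), ∏ ℓ ∈ Finset.range j, (α ℓ) ^ 2 / (β ℓ) ^ 2
      = ∑ j ∈ Finset.Ico 1 (k+1), (pp α β j)^2 := by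
    apply Finset.sum_congr rfl
    intro j _
    exact (pp_sq α β j).symm
  rw [VV, h1, h2, Finset.range_eq_Ico, Finset.sum_eq_sum_Ico_succ_bot (by omega : 0 < k+1),
    pp_zero]
  norm_num
set_option linter.unusedSectionVars false
open Matrix Finset

noncomputable def ee (n : ℕ) : Fin n → ℝ := fun j => if (j:ℕ) = 0 then 1 else 0

/-- the Krylov subspace of T -/
noncomputable def KT {n : ℕ} (T : Matrix (Fin n) (Fin n) ℝ) (k : ℕ) : Submodule ℝ (Fin n → ℝ) :=
  Submodule.span ℝ {c : Fin n → ℝ | ∃ j, j < k ∧ c = (T^j).mulVec (ee n)}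

section
variable {n : ℕ} {α β : ℕ → ℝ} {H : Matrix (Fin n) (Fin n) ℝ}
  (hH : ∀ i j : Fin n, H i j =
      if (i : ℕ) = j then α i else if (i : ℕ) = (j : ℕ) + 1 then β j else 0)
  {T : Matrix (Fin n) (Fin n) ℝ} (hT : T = H * Hᵀ)
  (hα : ∀ j, j < n → 0 < α j) (hβ : ∀ j, j + 1 < n → 0 < β j)

include hH

lemma Ht_expand (x : Fin n → ℝ) (i : Fin n) :
    Hᵀ.mulVec x i = ∑ ℓ : Fin n, H ℓ i * x ℓ := by
  simp [Matrix.mulVec, dotProduct, Matrix.transpose_apply]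

lemma H_expand (x : Fin n → ℝ) (i : Fin n) :
    H.mulVec x i = ∑ ℓ : Fin n, H i ℓ * x ℓ := by
  simp [Matrix.mulVec, dotProduct]

lemma Ht_mulVec_top (x : Fin n → ℝ) (i : Fin n) (h : (i:ℕ) + 1 = n) :
    Hᵀ.mulVec x i = α i * x i := by
  rw [Ht_expand hH]
  rw [← Finset.add_sum_erase _ _ (Finset.mem_univ i)]
  have h0 : H i i = α i := by rw [hH]; simp
  rw [h0, Finset.sum_eq_zero, add_zero]
  intro ℓ hℓ
  rw [Finset.mem_erase] at hℓ
  have hv : (ℓ:ℕ) ≠ (i:ℕ) := fun hc => hℓ.1 (Fin.ext hc)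
  have hlt : (ℓ:ℕ) < n := ℓ.isLt
  rw [hH]
  split_ifs with h1 h2
  · omega
  · omega
  · ring

lemma Ht_mulVec_mid (x : Fin n → ℝ) (i : Fin n) (h : (i:ℕ) + 1 < n) :
    Hᵀ.mulVec x i = α i * x i + β i * x ⟨(i:ℕ)+1, h⟩ := by
  rw [Ht_expand hH]
  have hne : (⟨(i:ℕ)+1, h⟩ : Fin n) ∈ Finset.univ.erase i := by
    rw [Finset.mem_erase]
    exact ⟨by simp [Fin.ext_iff], Finset.mem_univ _⟩
  rw [← Finset.add_sum_erase _ _ (Finset.mem_univ i), ← Finset.add_sum_erase _ _ hne]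
  have h0 : H i i = α i := by rw [hH]; simp
  have h1 : H ⟨(i:ℕ)+1, h⟩ i = β i := by
    rw [hH]
    simp only [Fin.val_mk]
    rw [if_neg (by omega), if_pos trivial]
  rw [h0, h1, Finset.sum_eq_zero, add_zero]
  intro ℓ hℓ
  simp only [Finset.mem_erase, Finset.mem_univ, and_true, ne_eq, Fin.ext_iff, Fin.val_mk] at hℓ
  rw [hH]
  (try simp only [Fin.val_mk]); split_ifs <;> first | omega | ring

lemma H_mulVec_bot (x : Fin n → ℝ) (i : Fin n) (h : (i:ℕ) = 0) :
    H.mulVec x i = α i * x i := by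
  rw [H_expand hH]
  rw [← Finset.add_sum_erase _ _ (Finset.mem_univ i)]
  have h0 : H i i = α i := by rw [hH]; simp
  rw [h0, Finset.sum_eq_zero, add_zero]
  intro ℓ hℓ
  rw [Finset.mem_erase] at hℓ
  have hv : (ℓ:ℕ) ≠ (i:ℕ) := fun hc => hℓ.1 (Fin.ext hc)
  rw [hH]
  split_ifs with h1 h2
  · omega
  · omega
  · ring

lemma H_mulVec_succ (x : Fin n → ℝ) (i : ℕ) (h : i + 1 < n) :
    H.mulVec x ⟨i+1, h⟩ = β i * x ⟨i, by omega⟩ + α (i+1) * x ⟨i+1, h⟩ := by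
  rw [H_expand hH]
  have hne : (⟨i, by omega⟩ : Fin n) ∈ Finset.univ.erase (⟨i+1, h⟩ : Fin n) := by
    rw [Finset.mem_erase]
    exact ⟨by simp [Fin.ext_iff], Finset.mem_univ _⟩
  rw [← Finset.add_sum_erase _ _ (Finset.mem_univ (⟨i+1, h⟩ : Fin n)),
    ← Finset.add_sum_erase _ _ hne]
  have h0 : H ⟨i+1, h⟩ ⟨i+1, h⟩ = α (i+1) := by rw [hH]; simp
  have h1 : H ⟨i+1, h⟩ ⟨i, by omega⟩ = β i := by
    rw [hH]
    simp only [Fin.val_mk]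
    rw [if_neg (by omega), if_pos trivial]
  rw [h0, h1, Finset.sum_eq_zero, add_zero]
  · ring
  intro ℓ hℓ
  simp only [Finset.mem_erase, Finset.mem_univ, and_true, ne_eq, Fin.ext_iff, Fin.val_mk] at hℓ
  rw [hH]
  (try simp only [Fin.val_mk]); split_ifs <;> first | omega | ring

include hT

lemma T_expand (i j : Fin n) : T i j = ∑ ℓ : Fin n, H i ℓ * H j ℓ := by
  rw [hT]
  simp [Matrix.mul_apply, Matrix.transpose_apply]

lemma T_low (i j : Fin n) (h : (j:ℕ) + 2 ≤ (i:ℕ)) : T i j = 0 := by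
  rw [T_expand hH hT]
  apply Finset.sum_eq_zero
  intro ℓ _
  rw [hH, hH]
  split_ifs with h1 h2 h3 h4 h5 <;> first | omega | ring

lemma T_sub (i j : Fin n) (h : (i:ℕ) = (j:ℕ) + 1) : T i j = α j * β j := by
  rw [T_expand hH hT]
  rw [← Finset.add_sum_erase _ _ (Finset.mem_univ j)]
  have h0 : H i j = β j := by
    rw [hH, if_neg (by omega), if_pos h]
  have h1 : H j j = α j := by rw [hH]; simp
  rw [h0, h1, Finset.sum_eq_zero, add_zero]
  · ring
  intro ℓ hℓ
  rw [Finset.mem_erase] at hℓ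
  have hv : (ℓ:ℕ) ≠ (j:ℕ) := fun hc => hℓ.1 (Fin.ext hc)
  rw [hH, hH]
  split_ifs with h1 h2 h3 h4 h5 <;> first | omega | ring

lemma T_symm : Tᵀ = T := by
  rw [hT, Matrix.transpose_mul, Matrix.transpose_transpose]



lemma pow_e_supp (j : ℕ) : ∀ m : Fin n, (j:ℕ) < (m:ℕ) → ((T^j).mulVec (ee n)) m = 0 := by
  induction j with
  | zero =>
    intro m hm
    rw [pow_zero, Matrix.one_mulVec]
    simp only [ee]
    rw [if_neg (by omega)]
  | succ j ih =>
    intro m hm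
    rw [pow_succ', ← Matrix.mulVec_mulVec]
    show ∑ ℓ : Fin n, T m ℓ * ((T^j).mulVec (ee n)) ℓ = 0
    apply Finset.sum_eq_zero
    intro ℓ _
    by_cases hc : j < (ℓ:ℕ)
    · rw [ih ℓ hc, mul_zero]
    · rw [T_low hH hT m ℓ (by omega), zero_mul]

include hα hβ in
lemma pow_e_diag (j : ℕ) (hj : j < n) : 0 < ((T^j).mulVec (ee n)) ⟨j, hj⟩ := by
  induction j with
  | zero =>
    rw [pow_zero, Matrix.one_mulVec, ee]
    norm_num
  | succ j ih =>
    rw [pow_succ', ← Matrix.mulVec_mulVec]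
    show 0 < ∑ ℓ : Fin n, T ⟨j+1, hj⟩ ℓ * ((T^j).mulVec (ee n)) ℓ
    have hjn : j < n := by omega
    rw [Finset.sum_eq_single (⟨j, hjn⟩ : Fin n)]
    · rw [T_sub hH hT ⟨j+1, hj⟩ ⟨j, hjn⟩ (by simp)]
      have h1 : 0 < α j * β j :=
        mul_pos (hα j (by omega)) (hβ j (by omega))
      exact mul_pos h1 (ih hjn)
    · intro ℓ _ hℓ
      have hv : (ℓ:ℕ) ≠ j := fun hc => hℓ (Fin.ext (by simp [hc]))
      by_cases hc : j < (ℓ:ℕ)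
      · rw [pow_e_supp hH hT j ℓ hc, mul_zero]
      · rw [T_low hH hT _ ℓ (by simp; omega), zero_mul]
    · intro hmem
      exact absurd (Finset.mem_univ _) hmem

lemma krylov_supp {k : ℕ} {c : Fin n → ℝ} (hc : c ∈ KT T k) :
    ∀ m : Fin n, k ≤ (m:ℕ) → c m = 0 := by
  let Z : Submodule ℝ (Fin n → ℝ) :=
    { carrier := {c : Fin n → ℝ | ∀ m : Fin n, k ≤ (m:ℕ) → c m = 0}
      add_mem' := fun ha hb m hm => by
        simp only [Pi.add_apply]
        rw [ha m hm, hb m hm, add_zero]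
      zero_mem' := fun m hm => rfl
      smul_mem' := fun r c hc m hm => by
        simp only [Pi.smul_apply]
        rw [hc m hm, smul_zero] }
  have hz : c ∈ Z := by
    apply Submodule.span_le.2 _ hc
    rintro x ⟨j, hj, rfl⟩
    intro m hm
    exact pow_e_supp hH hT j m (by omega)
  exact hz

include hα hβ in
lemma single_mem_KT {k : ℕ} (hk : k < n) :
    ∀ i : ℕ, i < k → ∀ (him : i < n) (r : ℝ), Pi.single (⟨i, him⟩ : Fin n) r ∈ KT T k := by
  intro i
  induction i using Nat.strong_induction_on with
  | _ i IH =>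
    intro hik him r
    have hx : (T^i).mulVec (ee n) ∈ KT T k :=
      Submodule.subset_span ⟨i, hik, rfl⟩
    set x := (T^i).mulVec (ee n) with hxdef
    have hxd : x ⟨i, him⟩ ≠ 0 := ne_of_gt (pow_e_diag hH hT hα hβ i him)
    have hdec : Pi.single (⟨i, him⟩ : Fin n) (x ⟨i, him⟩)
        = x - ∑ m ∈ Finset.univ.erase (⟨i, him⟩ : Fin n), Pi.single m (x m) := by
      rw [eq_sub_iff_add_eq]
      exact (Finset.add_sum_erase Finset.univ (fun m => Pi.single m (x m))
        (Finset.mem_univ _)).trans (Finset.univ_sum_single x)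
    have hmem : Pi.single (⟨i, him⟩ : Fin n) (x ⟨i, him⟩) ∈ KT T k := by
      rw [hdec]
      apply Submodule.sub_mem _ hx
      apply Submodule.sum_mem
      intro m hm
      rw [Finset.mem_erase] at hm
      by_cases hcm : (m:ℕ) < i
      · have := IH (m:ℕ) hcm (by omega) m.isLt (x m)
        simpa using this
      · have hmi : i < (m:ℕ) := by
          rcases Nat.lt_or_ge i (m:ℕ) with h | h
          · exact h
          · exfalso; exact hm.1 (Fin.ext (by simp; omega))
        rw [hxdef, pow_e_supp hH hT i m hmi, Pi.single_zero]
        exact Submodule.zero_mem _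
    have : (Pi.single (⟨i, him⟩ : Fin n) r : Fin n → ℝ)
        = (r / x ⟨i, him⟩) • (Pi.single (⟨i, him⟩ : Fin n) (x ⟨i, him⟩) : Fin n → ℝ) := by
      rw [← Pi.single_smul]
      congr 1
      rw [smul_eq_mul, div_mul_cancel₀ _ hxd]
    rw [this]
    exact Submodule.smul_mem _ _ hmem

include hα hβ in
lemma krylov_of_supp {k : ℕ} (hk : k < n) {c : Fin n → ℝ}
    (hc : ∀ m : Fin n, k ≤ (m:ℕ) → c m = 0) : c ∈ KT T k := by
  rw [← Finset.univ_sum_single c]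
  apply Submodule.sum_mem
  intro m _
  by_cases hm : (m:ℕ) < k
  · have := single_mem_KT hH hT hα hβ hk (m:ℕ) hm m.isLt (c m)
    simpa using this
  · rw [hc m (by omega), Pi.single_zero]
    exact Submodule.zero_mem _

end

noncomputable def vvv (α β : ℕ → ℝ) (n k : ℕ) : Fin n → ℝ :=
  fun j => if (j:ℕ) ≤ k then pp α β (j:ℕ) else 0

noncomputable def DD (α β : ℕ → ℝ) (n k : ℕ) : Fin n → ℝ :=
  fun i => if (i:ℕ) < k then SS α β k (i:ℕ) / (VV α β k * pp α β (i:ℕ) * α (i:ℕ)) else 0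

noncomputable def ccv (α β : ℕ → ℝ) (n k : ℕ) : Fin n → ℝ :=
  fun i => if (i:ℕ) < k then
    (pp α β (i:ℕ) / VV α β k) *
      ∑ j ∈ Finset.Ico (i:ℕ) k, SS α β k j / ((pp α β j)^2 * (α j)^2)
  else 0

lemma SS_zero_eq (α β : ℕ → ℝ) (k : ℕ) : SS α β k 0 = VV α β k - 1 := by
  rw [SS, VV_eq_sum, Finset.range_eq_Ico,
    Finset.sum_eq_sum_Ico_succ_bot (by omega : 0 < k+1), pp_zero]
  norm_num

lemma SS_step (α β : ℕ → ℝ) {k i : ℕ} (h : i + 1 ≤ k) :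
    SS α β k i = pp α β (i+1)^2 + SS α β k (i+1) := by
  rw [SS, SS, Finset.sum_eq_sum_Ico_succ_bot (by omega : i+1 < k+1)]

lemma SS_top (α β : ℕ → ℝ) (k : ℕ) : SS α β k k = 0 := by
  rw [SS]
  simp

section
variable {n : ℕ} {α β : ℕ → ℝ} {H : Matrix (Fin n) (Fin n) ℝ}
  (hH : ∀ i j : Fin n, H i j =
      if (i : ℕ) = j then α i else if (i : ℕ) = (j : ℕ) + 1 then β j else 0)
  {T : Matrix (Fin n) (Fin n) ℝ} (hT : T = H * Hᵀ)
  (hα : ∀ j, j < n → 0 < α j) (hβ : ∀ j, j + 1 < n → 0 < β j)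
  {k : ℕ} (hk : k < n)

include hH hα hβ hk

lemma Ht_v (i : Fin n) :
    Hᵀ.mulVec (vvv α β n k) i = if (i:ℕ) = k then α k * pp α β k else 0 := by
  by_cases h : (i:ℕ) + 1 < n
  · rw [Ht_mulVec_mid hH _ i h]
    rcases lt_trichotomy (i:ℕ) k with hik | hik | hik
    · have hv1 : vvv α β n k i = pp α β (i:ℕ) := if_pos (by omega)
      have hv2 : vvv α β n k ⟨(i:ℕ)+1, h⟩ = pp α β ((i:ℕ)+1) := by
        rw [vvv]
        simp only [Fin.val_mk]
        rw [if_pos (by omega)]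
      rw [hv1, hv2, if_neg (by omega), pp_succ]
      have hβne : β (i:ℕ) ≠ 0 := ne_of_gt (hβ _ (by omega))
      field_simp
      ring
    · have hv1 : vvv α β n k i = pp α β (i:ℕ) := if_pos (by omega)
      have hv2 : vvv α β n k ⟨(i:ℕ)+1, h⟩ = 0 := by
        rw [vvv]
        simp only [Fin.val_mk]
        rw [if_neg (by omega)]
      rw [hv1, hv2, if_pos hik, hik, mul_zero, add_zero]
    · have hv1 : vvv α β n k i = 0 := if_neg (by omega)
      have hv2 : vvv α β n k ⟨(i:ℕ)+1, h⟩ = 0 := by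
        rw [vvv]
        simp only [Fin.val_mk]
        rw [if_neg (by omega)]
      rw [hv1, hv2, if_neg (by omega), mul_zero, mul_zero, add_zero]
  · have h' : (i:ℕ) + 1 = n := by have := i.isLt; omega
    rw [Ht_mulVec_top hH _ i h']
    rcases eq_or_lt_of_le (show k ≤ (i:ℕ) by omega) with hik | hik
    · rw [if_pos (by omega)]
      have hv1 : vvv α β n k i = pp α β (i:ℕ) := if_pos (by omega)
      rw [hv1, ← hik]
    · have hv1 : vvv α β n k i = 0 := if_neg (by omega)
      rw [hv1, if_neg (by omega), mul_zero]

include hT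

lemma Tv_supp (m : Fin n) (hm : (m:ℕ) < k) : T.mulVec (vvv α β n k) m = 0 := by
  rw [hT, ← Matrix.mulVec_mulVec]
  show ∑ ℓ : Fin n, H m ℓ * (Hᵀ.mulVec (vvv α β n k)) ℓ = 0
  apply Finset.sum_eq_zero
  intro ℓ _
  rw [Ht_v hH hα hβ hk]
  by_cases hc : (ℓ:ℕ) = k
  · rw [hH]
    rw [if_neg (by omega), if_neg (by omega), zero_mul]
  · rw [if_neg hc, mul_zero]

lemma Ht_c (i : Fin n) : Hᵀ.mulVec (ccv α β n k) i = DD α β n k i := by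
  have hV : VV α β k ≠ 0 := ne_of_gt (VV_pos α β k)
  by_cases hik : (i:ℕ) < k
  · have h : (i:ℕ) + 1 < n := by omega
    rw [Ht_mulVec_mid hH _ i h]
    have hc1 : ccv α β n k i = (pp α β (i:ℕ) / VV α β k) *
        ∑ j ∈ Finset.Ico (i:ℕ) k, SS α β k j / ((pp α β j)^2 * (α j)^2) := if_pos hik
    have hc2 : ccv α β n k ⟨(i:ℕ)+1, h⟩ = (pp α β ((i:ℕ)+1) / VV α β k) *
        ∑ j ∈ Finset.Ico ((i:ℕ)+1) k, SS α β k j / ((pp α β j)^2 * (α j)^2) := by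
      rw [ccv]
      simp only [Fin.val_mk]
      by_cases h2 : (i:ℕ)+1 < k
      · rw [if_pos h2]
      · rw [if_neg h2]
        have : Finset.Ico ((i:ℕ)+1) k = ∅ := by
          rw [Finset.Ico_eq_empty_iff]
          omega
        rw [this, Finset.sum_empty, mul_zero]
    rw [hc1, hc2, Finset.sum_eq_sum_Ico_succ_bot hik, DD]
    rw [if_pos hik, pp_succ]
    have hβne : β (i:ℕ) ≠ 0 := ne_of_gt (hβ _ (by omega))
    have hαne : α (i:ℕ) ≠ 0 := ne_of_gt (hα _ (by omega))
    have hpne : pp α β (i:ℕ) ≠ 0 := pp_ne_zero hα hβ (by omega)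
    field_simp
    ring
  · by_cases h : (i:ℕ) + 1 < n
    · rw [Ht_mulVec_mid hH _ i h]
      have hc1 : ccv α β n k i = 0 := if_neg hik
      have hc2 : ccv α β n k ⟨(i:ℕ)+1, h⟩ = 0 := by
        rw [ccv]
        simp only [Fin.val_mk]
        rw [if_neg (by omega)]
      rw [hc1, hc2, DD, if_neg hik, mul_zero, mul_zero, add_zero]
    · have h' : (i:ℕ) + 1 = n := by have := i.isLt; omega
      rw [Ht_mulVec_top hH _ i h']
      rw [show ccv α β n k i = 0 from if_neg hik, DD, if_neg hik, mul_zero]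

lemma H_D : H.mulVec (DD α β n k) = ee n - (VV α β k)⁻¹ • vvv α β n k := by
  have hV : VV α β k ≠ 0 := ne_of_gt (VV_pos α β k)
  funext m
  rcases Nat.eq_zero_or_eq_succ_pred (m:ℕ) with hm | hm
  · rw [H_mulVec_bot hH _ m hm]
    have he : ee n m = 1 := by simp [ee, hm]
    have hv : vvv α β n k m = 1 := by simp [vvv, hm, pp_zero]
    simp only [Pi.sub_apply, Pi.smul_apply, smul_eq_mul, he, hv, mul_one]
    by_cases hk0 : k = 0
    · have hD : DD α β n k m = 0 := by rw [DD, if_neg (by omega)]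
      have hV1 : VV α β k = 1 := by rw [hk0, VV]; simp
      rw [hD, hV1, mul_zero]
      norm_num
    · have hD : DD α β n k m = SS α β k 0 / (VV α β k * pp α β 0 * α 0) := by
        rw [DD, if_pos (by omega), hm]
      rw [hD, SS_zero_eq, pp_zero, hm]
      have hαne : α 0 ≠ 0 := ne_of_gt (hα 0 (by omega))
      field_simp
  · set i := (m:ℕ) - 1 with hidef
    have hm1 : (m:ℕ) = i + 1 := by omega
    have hin : i + 1 < n := by rw [← hm1]; exact m.isLt
    have hmeq : m = ⟨i+1, hin⟩ := Fin.ext (by simp [hm1])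
    rw [hmeq, H_mulVec_succ hH _ i hin]
    have he : ee n ⟨i+1, hin⟩ = 0 := by rw [ee]; simp only [Fin.val_mk]; rw [if_neg (by omega)]
    by_cases hik : i + 1 ≤ k
    · have hD1 : DD α β n k ⟨i, by omega⟩ = SS α β k i / (VV α β k * pp α β i * α i) := by
        rw [DD]; simp only [Fin.val_mk]; rw [if_pos (by omega)]
      have hD2 : DD α β n k ⟨i+1, hin⟩
          = SS α β k (i+1) / (VV α β k * pp α β (i+1) * α (i+1)) := by
        rw [DD]; simp only [Fin.val_mk]
        by_cases h2 : i + 1 < k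
        · rw [if_pos h2]
        · rw [if_neg h2]
          have : i + 1 = k := by omega
          rw [this, SS_top]
          norm_num
      have hv : vvv α β n k ⟨i+1, hin⟩ = pp α β (i+1) := by
        rw [vvv]; simp only [Fin.val_mk]; rw [if_pos hik]
      simp only [Pi.sub_apply, Pi.smul_apply, smul_eq_mul, he, hv]
      rw [hD1, hD2, SS_step α β hik]
      have hβne : β i ≠ 0 := ne_of_gt (hβ _ (by omega))
      have hα1 : α i ≠ 0 := ne_of_gt (hα _ (by omega))
      have hα2 : α (i+1) ≠ 0 := ne_of_gt (hα _ (by omega))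
      have hp1 : pp α β i ≠ 0 := pp_ne_zero hα hβ (by omega)
      have hp2 : pp α β (i+1) ≠ 0 := pp_ne_zero hα hβ (by omega)
      have hrel : β i * pp α β (i+1) = - (α i * pp α β i) := by
        rw [pp_succ]
        field_simp
      have hβi : β i = -(α i * pp α β i) / pp α β (i+1) := by
        rw [eq_div_iff hp2]
        exact hrel
      rw [hβi]
      field_simp
      ring
    · have hD1 : DD α β n k ⟨i, by omega⟩ = 0 := by
        rw [DD]; simp only [Fin.val_mk]; rw [if_neg (by omega)]
      have hD2 : DD α β n k ⟨i+1, hin⟩ = 0 := by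
        rw [DD]; simp only [Fin.val_mk]; rw [if_neg (by omega)]
      have hv : vvv α β n k ⟨i+1, hin⟩ = 0 := by
        rw [vvv]; simp only [Fin.val_mk]; rw [if_neg (by omega)]
      simp [hD1, hD2, hv, he]

end

lemma e_dot_v {n k : ℕ} (α β : ℕ → ℝ) (hn : 0 < n) :
    ee n ⬝ᵥ vvv α β n k = 1 := by
  show ∑ j : Fin n, ee n j * vvv α β n k j = 1
  rw [Finset.sum_eq_single (⟨0, hn⟩ : Fin n)]
  · have h1 : ee n ⟨0, hn⟩ = 1 := by simp [ee]
    have h2 : vvv α β n k ⟨0, hn⟩ = 1 := by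
      simp only [vvv, Fin.val_mk]
      rw [if_pos (by omega), pp_zero]
    rw [h1, h2, mul_one]
  · intro j _ hj
    have : ee n j = 0 := by
      simp only [ee]
      rw [if_neg (fun hc => hj (Fin.ext (by simp [hc])))]
    rw [this, zero_mul]
  · intro h
    exact absurd (Finset.mem_univ _) h

lemma v_dot_v {n k : ℕ} (α β : ℕ → ℝ) (hk : k < n) :
    vvv α β n k ⬝ᵥ vvv α β n k = VV α β k := by
  show ∑ j : Fin n, vvv α β n k j * vvv α β n k j = VV α β k
  simp only [vvv]
  rw [Fin.sum_univ_eq_sum_range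
    (fun t => (if t ≤ k then pp α β t else 0) * (if t ≤ k then pp α β t else 0)) n]
  rw [VV_eq_sum]
  rw [← Finset.sum_subset (Finset.range_subset_range.2 (by omega : k + 1 ≤ n))
    (fun x _ hx => by rw [Finset.mem_range, not_lt] at hx; rw [if_neg (by omega), zero_mul])]
  apply Finset.sum_congr rfl
  intro j hj
  rw [Finset.mem_range] at hj
  rw [if_pos (by omega), sq]

/-- Deterministic MINRES residual formula: for MINRES applied to `W x = b` with `W`
symmetric positive definite, `‖b‖₂ = 1` and `x₀ = 0`, with the Cholesky data
`α, β` of the Lanczos Jacobi matrix `T = H Hᵀ`, one has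
`‖r_k‖₂ = (1 + ∑_{j=1}^k ∏_{ℓ<j} α_ℓ²/β_ℓ²)^{-1/2}` for `k < n`. -/
theorem stmt7 (N n : ℕ) (hn : 0 < n) (hnN : n ≤ N)
    (W : Matrix (Fin N) (Fin N) ℝ) (hW : W.PosDef)
    (b : Fin N → ℝ) (hb : b ⬝ᵥ b = 1)
    (α β : ℕ → ℝ) (hαpos : ∀ j, j < n → 0 < α j) (hβpos : ∀ j, j + 1 < n → 0 < β j)
    (H : Matrix (Fin n) (Fin n) ℝ)
    (hH : ∀ i j : Fin n, H i j =
      if (i : ℕ) = j then α i else if (i : ℕ) = (j : ℕ) + 1 then β j else 0)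
    (T : Matrix (Fin n) (Fin n) ℝ) (hT : T = H * Hᵀ)
    (Q : Matrix (Fin N) (Fin n) ℝ)
    (hQorth : Qᵀ * Q = 1)
    (hq1 : ∀ i, Q i ⟨0, hn⟩ = b i)
    (hWQ : W * Q = Q * T)
    (k : ℕ) (hk : k < n)
    (xk : Fin N → ℝ)
    (hxkmem : xk ∈ Submodule.span ℝ {v : Fin N → ℝ | ∃ j, j < k ∧ v = (W ^ j).mulVec b})
    (hxkmin : ∀ y ∈ Submodule.span ℝ {v : Fin N → ℝ | ∃ j, j < k ∧ v = (W ^ j).mulVec b},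
      (b - W.mulVec xk) ⬝ᵥ (b - W.mulVec xk) ≤ (b - W.mulVec y) ⬝ᵥ (b - W.mulVec y)) :
    Real.sqrt ((b - W.mulVec xk) ⬝ᵥ (b - W.mulVec xk)) =
      (Real.sqrt (1 + ∑ j ∈ Finset.Icc 1 k,
        ∏ ℓ ∈ Finset.range j, (α ℓ) ^ 2 / (β ℓ) ^ 2))⁻¹ := by
  have hVpos : 0 < VV α β k := VV_pos α β k
  have hVne : VV α β k ≠ 0 := ne_of_gt hVpos
  -- Q preserves the dot product
  have hdotQ : ∀ u w : Fin n → ℝ, (Q.mulVec u) ⬝ᵥ (Q.mulVec w) = u ⬝ᵥ w := by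
    intro u w
    have h1 : Q.mulVec u = Matrix.vecMul u Qᵀ := (Matrix.vecMul_transpose Q u).symm
    rw [Matrix.dotProduct_mulVec, h1, Matrix.vecMul_vecMul, hQorth, Matrix.vecMul_one]
  have hQe : Q.mulVec (ee n) = b := by
    funext i
    show ∑ j : Fin n, Q i j * ee n j = b i
    rw [Finset.sum_eq_single (⟨0, hn⟩ : Fin n)]
    · have h1 : ee n ⟨0, hn⟩ = 1 := by simp [ee]
      rw [h1, mul_one, hq1]
    · intro j _ hj
      have : ee n j = 0 := by
        simp only [ee]
        rw [if_neg (fun hc => hj (Fin.ext (by simp [hc])))]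
      rw [this, mul_zero]
    · intro h
      exact absurd (Finset.mem_univ _) h
  have hWQvec : ∀ x : Fin n → ℝ, W.mulVec (Q.mulVec x) = Q.mulVec (T.mulVec x) := by
    intro x
    rw [Matrix.mulVec_mulVec, Matrix.mulVec_mulVec, hWQ]
  have hpow : ∀ j : ℕ, (W^j).mulVec b = Q.mulVec ((T^j).mulVec (ee n)) := by
    intro j
    induction j with
    | zero => rw [pow_zero, pow_zero, Matrix.one_mulVec, Matrix.one_mulVec, hQe]
    | succ j ih =>
      rw [pow_succ', pow_succ', ← Matrix.mulVec_mulVec, ← Matrix.mulVec_mulVec, ih, hWQvec]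
  have hset : {v : Fin N → ℝ | ∃ j, j < k ∧ v = (W ^ j).mulVec b}
      = (Matrix.mulVecLin Q) '' {c : Fin n → ℝ | ∃ j, j < k ∧ c = (T^j).mulVec (ee n)} := by
    ext x
    constructor
    · rintro ⟨j, hj, rfl⟩
      exact ⟨(T^j).mulVec (ee n), ⟨j, hj, rfl⟩, by rw [Matrix.mulVecLin_apply, ← hpow j]⟩
    · rintro ⟨c, ⟨j, hj, rfl⟩, rfl⟩
      exact ⟨j, hj, by rw [Matrix.mulVecLin_apply, hpow j]⟩
  have hmap : Submodule.span ℝ {v : Fin N → ℝ | ∃ j, j < k ∧ v = (W ^ j).mulVec b}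
      = Submodule.map (Matrix.mulVecLin Q) (KT T k) := by
    rw [hset, KT, Submodule.span_image]
  -- decompose xk
  rw [hmap] at hxkmem
  obtain ⟨c, hcK, hcx⟩ := hxkmem
  have hres : b - W.mulVec xk = Q.mulVec (ee n - T.mulVec c) := by
    rw [Matrix.mulVec_sub, hQe, ← hcx, Matrix.mulVecLin_apply, hWQvec]
  -- lower bound for any element of the Krylov space of T
  have hlow : ∀ c' ∈ KT T k, (VV α β k)⁻¹
      ≤ (ee n - T.mulVec c') ⬝ᵥ (ee n - T.mulVec c') := by
    intro c' hc'
    have hrv : (ee n - T.mulVec c') ⬝ᵥ vvv α β n k = 1 := by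
      rw [sub_dotProduct, e_dot_v α β hn]
      have h2 : (T.mulVec c') ⬝ᵥ vvv α β n k = 0 := by
        rw [dotProduct_comm, Matrix.dotProduct_mulVec]
        have hT' : Matrix.vecMul (vvv α β n k) T = T.mulVec (vvv α β n k) := by
          conv_lhs => rw [← T_symm hH hT]
          rw [Matrix.vecMul_transpose]
        rw [hT']
        show ∑ m : Fin n, (T.mulVec (vvv α β n k)) m * c' m = 0
        apply Finset.sum_eq_zero
        intro m _
        by_cases hm : (m:ℕ) < k
        · rw [Tv_supp hH hT hαpos hβpos hk m hm, zero_mul]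
        · rw [krylov_supp hH hT hc' m (by omega), mul_zero]
      rw [h2, sub_zero]
    set r := ee n - T.mulVec c' with hrdef
    have hcs := Finset.sum_mul_sq_le_sq_mul_sq Finset.univ r (vvv α β n k)
    have ha : ∑ i : Fin n, r i * vvv α β n k i = 1 := hrv
    have hb' : ∑ i : Fin n, r i ^ 2 = r ⬝ᵥ r := by
      apply Finset.sum_congr rfl
      intro i _
      rw [sq]
    have hcv : ∑ i : Fin n, vvv α β n k i ^ 2 = VV α β k := by
      rw [← v_dot_v α β hk]
      apply Finset.sum_congr rfl
      intro i _
      rw [sq]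
    rw [ha, hb', hcv, one_pow] at hcs
    rw [inv_eq_one_div, div_le_iff₀ hVpos]
    linarith
  -- the optimal element
  have hcstar_mem : ccv α β n k ∈ KT T k := by
    apply krylov_of_supp hH hT hαpos hβpos hk
    intro m hm
    simp only [ccv]
    rw [if_neg (by omega)]
  have hHtc : Hᵀ.mulVec (ccv α β n k) = DD α β n k :=
    funext (Ht_c hH hT hαpos hβpos hk)
  have hrstar : ee n - T.mulVec (ccv α β n k) = (VV α β k)⁻¹ • vvv α β n k := by
    rw [hT, ← Matrix.mulVec_mulVec, hHtc, H_D hH hT hαpos hβpos hk, sub_sub_cancel]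
  have hymem : Q.mulVec (ccv α β n k)
      ∈ Submodule.span ℝ {v : Fin N → ℝ | ∃ j, j < k ∧ v = (W ^ j).mulVec b} := by
    rw [hmap]
    exact ⟨ccv α β n k, hcstar_mem, Matrix.mulVecLin_apply _ _⟩
  have hup := hxkmin _ hymem
  have hyres : b - W.mulVec (Q.mulVec (ccv α β n k)) = Q.mulVec ((VV α β k)⁻¹ • vvv α β n k) := by
    rw [hWQvec, ← hrstar, Matrix.mulVec_sub, hQe]
  have hupval : (b - W.mulVec (Q.mulVec (ccv α β n k)))
      ⬝ᵥ (b - W.mulVec (Q.mulVec (ccv α β n k))) = (VV α β k)⁻¹ := by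
    rw [hyres, hdotQ, smul_dotProduct, dotProduct_smul, v_dot_v α β hk,
      smul_eq_mul, smul_eq_mul]
    field_simp
  have hRval : (b - W.mulVec xk) ⬝ᵥ (b - W.mulVec xk) = (VV α β k)⁻¹ := by
    apply le_antisymm
    · rw [hupval] at hup
      exact hup
    · rw [hres, hdotQ]
      exact hlow c hcK
  rw [hRval, Real.sqrt_inv]
  rw [VV]
end
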